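/- Let F : ℝ → ℂ be three times continuously differentiable with F′(0) = 0 and sup_{s ≥ 0} (|F(s)| + |F′(s)| + |F″(s)| + |F‴(s)|) < ∞ (no assumption on F″(0)). Let g : ℝ → ℂ be measurable with ∫_ℝ (1+|y|)³|g(y)| dy < ∞ and ∫_ℝ y^k·g(y) dy = 0 for k = 0, 1, 2. Then for every λ > 0 and every x ∈ ℝ, both integrals converge absolutely and ∫_ℝ F(λ|x−y|) g(y) dy = −(λ³/2)·∫_ℝ ∫₀¹ (1−θ)²·sgn(x−θy)·F‴(λ|x−θy|)·y³·g(y) dθ dy. -/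

import Mathlib

open MeasureTheory

lemma sign_mul_abs7 (r : ℝ) : Real.sign r * |r| = r := by
  rcases lt_trichotomy r 0 with h | h | h
  · rw [Real.sign_of_neg h, abs_of_neg h]; ring
  · simp [h]
  · rw [Real.sign_of_pos h, abs_of_pos h]; ring

lemma abs_sign_le7 (r : ℝ) : |Real.sign r| ≤ 1 := by
  rcases Real.sign_apply_eq r with h | h | h <;> rw [h] <;> norm_num

lemma measurable_sign7 : Measurable Real.sign := by
  have : Real.sign = fun r : ℝ => if r < 0 then (-1 : ℝ) else if 0 < r then 1 else 0 := rfl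
  rw [this]
  exact Measurable.ite (measurableSet_lt measurable_id measurable_const) measurable_const
    (Measurable.ite (measurableSet_lt measurable_const measurable_id) measurable_const
      measurable_const)

noncomputable def A7 (F : ℝ → ℂ) (l s : ℝ) : ℂ := F (l * |s|)
noncomputable def B7 (F : ℝ → ℂ) (l s : ℝ) : ℂ :=
  ((l * Real.sign s : ℝ) : ℂ) * deriv F (l * |s|)
noncomputable def C7 (F : ℝ → ℂ) (l s : ℝ) : ℂ :=
  ((l ^ 2 : ℝ) : ℂ) * iteratedDeriv 2 F (l * |s|)
noncomputable def D7 (F : ℝ → ℂ) (l s : ℝ) : ℂ :=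
  ((l ^ 3 * Real.sign s : ℝ) : ℂ) * iteratedDeriv 3 F (l * |s|)

section derivs

variable {F : ℝ → ℂ} (hF : ContDiff ℝ 3 F) (hF'0 : deriv F 0 = 0) (l : ℝ)

lemma hasDerivAt_u7 {s : ℝ} (hs : s ≠ 0) :
    HasDerivAt (fun t : ℝ => l * |t|) (l * Real.sign s) s := by
  have h := (hasDerivAt_abs hs).const_mul l
  refine h.congr_deriv ?_
  rcases hs.lt_or_gt with h' | h'
  · simp [Real.sign_of_neg h', h']
  · simp [Real.sign_of_pos h', h']

include hF in
lemma diff_F7 : Differentiable ℝ F := hF.differentiable (by norm_num)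

include hF in
lemma cd2_derivF7 : ContDiff ℝ 2 (deriv F) := by
  have h : ContDiff ℝ (2 + 1 : ℕ) F := by exact_mod_cast hF
  exact (contDiff_succ_iff_deriv.mp (by exact_mod_cast h)).2.2

include hF in
lemma cd1_deriv2F7 : ContDiff ℝ 1 (deriv (deriv F)) := by
  have h := cd2_derivF7 hF
  have h2 : ContDiff ℝ (1 + 1 : ℕ) (deriv F) := by exact_mod_cast h
  exact (contDiff_succ_iff_deriv.mp (by exact_mod_cast h2)).2.2

lemma iter2_eq7 : iteratedDeriv 2 F = deriv (deriv F) := by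
  rw [iteratedDeriv_succ, iteratedDeriv_one]

lemma iter3_eq7 : iteratedDeriv 3 F = deriv (iteratedDeriv 2 F) := iteratedDeriv_succ

include hF hF'0 in
lemma hasDerivAt_A7 (s : ℝ) : HasDerivAt (A7 F l) (B7 F l s) s := by
  rcases eq_or_ne s 0 with rfl | hs
  · rw [hasDerivAt_iff_isLittleO]
    have hF1 : HasDerivAt F 0 0 := by
      simpa [hF'0] using ((diff_F7 hF) 0).hasDerivAt
    have h1 : (fun t : ℝ => F t - F 0) =o[nhds 0] (fun t : ℝ => t) := by
      simpa using hasDerivAt_iff_isLittleO.1 hF1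
    have hu : Filter.Tendsto (fun t : ℝ => l * |t|) (nhds 0) (nhds 0) := by
      have : Continuous (fun t : ℝ => l * |t|) := continuous_const.mul continuous_abs
      simpa using this.tendsto 0
    have h2 := h1.comp_tendsto hu
    have h3 : (fun t : ℝ => l * |t|) =O[nhds 0] (fun t : ℝ => t) := by
      apply Asymptotics.isBigO_of_le' (c := |l|)
      intro t
      simp [abs_mul]
    have h4 := h2.trans_isBigO h3
    simpa [A7, B7, Real.sign_zero, Function.comp_def] using h4
  · have hu := hasDerivAt_u7 l hs
    have hf : HasDerivAt F (deriv F (l * |s|)) (l * |s|) := ((diff_F7 hF) _).hasDerivAt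
    have := hf.scomp s hu
    exact this.congr_deriv (by simp [B7, Complex.real_smul])

include hF hF'0 in
lemma hasDerivAt_B7 (s : ℝ) : HasDerivAt (B7 F l) (C7 F l s) s := by
  have hd2 := iter2_eq7 (F := F)
  have hdiff : Differentiable ℝ (deriv F) := (cd2_derivF7 hF).differentiable (by norm_num)
  rcases eq_or_ne s 0 with rfl | hs
  · rw [hasDerivAt_iff_isLittleO]
    have hD1 : HasDerivAt (deriv F) (iteratedDeriv 2 F 0) 0 := by
      rw [hd2]; exact (hdiff 0).hasDerivAt
    have h1 : (fun t : ℝ => deriv F t - t • iteratedDeriv 2 F 0) =o[nhds 0]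
        (fun t : ℝ => t) := by
      simpa [hF'0] using hasDerivAt_iff_isLittleO.1 hD1
    have hu : Filter.Tendsto (fun t : ℝ => l * |t|) (nhds 0) (nhds 0) := by
      have : Continuous (fun t : ℝ => l * |t|) := continuous_const.mul continuous_abs
      simpa using this.tendsto 0
    have h2 := h1.comp_tendsto hu
    have h3 : (fun t : ℝ => l * |t|) =O[nhds 0] (fun t : ℝ => t) := by
      apply Asymptotics.isBigO_of_le' (c := |l|)
      intro t
      simp [abs_mul]
    have h4 := h2.trans_isBigO h3
    have hb : (fun t : ℝ => ((l * Real.sign t : ℝ) : ℂ)) =O[nhds 0]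
        (fun _ : ℝ => (1 : ℝ)) := by
      apply Asymptotics.isBigO_of_le' (c := |l|)
      intro t
      simp only [Complex.norm_real, Real.norm_eq_abs, abs_mul, norm_one, mul_one]
      calc |l| * |Real.sign t| ≤ |l| * 1 :=
        mul_le_mul_of_nonneg_left (abs_sign_le7 t) (abs_nonneg l)
      _ = |l| := mul_one _
    have h5 := hb.mul_isLittleO h4
    refine h5.congr' ?_ ?_
    · filter_upwards with t
      have hσ : ((Real.sign t : ℝ) : ℂ) * ((|t| : ℝ) : ℂ) = (t : ℂ) := by
        rw [← Complex.ofReal_mul]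
        exact_mod_cast congrArg Complex.ofReal (sign_mul_abs7 t)
      simp only [B7, C7, Function.comp, Real.sign_zero, mul_zero, zero_mul, abs_zero,
        Complex.ofReal_zero, sub_zero, Complex.real_smul, Complex.ofReal_mul]
      push_cast
      linear_combination (-((l : ℂ) ^ 2 * iteratedDeriv 2 F 0)) * hσ
    · filter_upwards with t; simp
  · have hu := hasDerivAt_u7 l hs
    have hmain : HasDerivAt (fun t => ((l * Real.sign s : ℝ) : ℂ) * deriv F (l * |t|))
        (((l * Real.sign s : ℝ) : ℂ) * ((l * Real.sign s) • iteratedDeriv 2 F (l * |s|))) s := by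
      have hf : HasDerivAt (deriv F) (iteratedDeriv 2 F (l * |s|)) (l * |s|) := by
        rw [hd2]; exact (hdiff _).hasDerivAt
      exact (hf.scomp s hu).const_mul _
    have heq : (fun t => ((l * Real.sign s : ℝ) : ℂ) * deriv F (l * |t|)) =ᶠ[nhds s]
        (B7 F l) := by
      rcases hs.lt_or_gt with h' | h'
      · filter_upwards [Iio_mem_nhds h'] with t ht
        simp [B7, Real.sign_of_neg (Set.mem_Iio.mp ht), Real.sign_of_neg h']
      · filter_upwards [Ioi_mem_nhds h'] with t ht
        simp [B7, Real.sign_of_pos (Set.mem_Ioi.mp ht), Real.sign_of_pos h']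
    have := hmain.congr_of_eventuallyEq heq.symm
    refine this.congr_deriv ?_
    rcases hs.lt_or_gt with h' | h' <;>
      simp [C7, Real.sign_of_neg, Real.sign_of_pos, h', Complex.real_smul] <;> push_cast <;> ring

include hF in
lemma hasDerivAt_C7 {s : ℝ} (hs : s ≠ 0) : HasDerivAt (C7 F l) (D7 F l s) s := by
  have hd3 := iter3_eq7 (F := F)
  have hdiff : Differentiable ℝ (iteratedDeriv 2 F) := by
    rw [iter2_eq7]
    exact (cd1_deriv2F7 hF).differentiable (by norm_num)
  have hu := hasDerivAt_u7 l hs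
  have hf : HasDerivAt (iteratedDeriv 2 F) (iteratedDeriv 3 F (l * |s|)) (l * |s|) := by
    rw [hd3]; exact (hdiff _).hasDerivAt
  have := (hf.scomp s hu).const_mul ((l ^ 2 : ℝ) : ℂ)
  refine this.congr_deriv ?_
  simp [D7, Complex.real_smul]
  push_cast
  ring

end derivs

section key

variable {F : ℝ → ℂ} (hF : ContDiff ℝ 3 F) (hF'0 : deriv F 0 = 0) (l : ℝ)

include hF hF'0 in
lemma contA7 : Continuous (A7 F l) := by
  have h : Differentiable ℝ (A7 F l) := fun s => (hasDerivAt_A7 hF hF'0 l s).differentiableAt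
  exact h.continuous

include hF hF'0 in
lemma contB7 : Continuous (B7 F l) := by
  have h : Differentiable ℝ (B7 F l) := fun s => (hasDerivAt_B7 hF hF'0 l s).differentiableAt
  exact h.continuous

include hF in
lemma contC7 : Continuous (C7 F l) := by
  refine continuous_const.mul ?_
  exact (hF.continuous_iteratedDeriv 2 (by norm_num)).comp
    (continuous_const.mul continuous_abs)

include hF in
lemma contD3_7 : Continuous (iteratedDeriv 3 F) :=
  hF.continuous_iteratedDeriv 3 (by norm_num)

include hF in
lemma measD7 : Measurable (D7 F l) := by
  apply Measurable.mul
  · exact Complex.measurable_ofReal.comp (measurable_const.mul measurable_sign7)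
  · exact ((contD3_7 hF).comp (continuous_const.mul continuous_abs)).measurable

lemma intervalIntegrable_mul_bdd7 {c f : ℝ → ℂ} (hc : Continuous c) (hf : Measurable f)
    {Cb : ℝ} (hC : ∀ t, ‖f t‖ ≤ Cb) (a b : ℝ) :
    IntervalIntegrable (fun t => c t * f t) volume a b := by
  rw [intervalIntegrable_iff]
  refine Integrable.mono' (g := fun t => ‖c t‖ * Cb) ?_ ?_ (ae_of_all _ ?_)
  · exact (hc.norm.mul continuous_const).integrableOn_uIoc
  · exact (hc.measurable.mul hf).aestronglyMeasurable
  · intro t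
    rw [norm_mul]
    exact mul_le_mul_of_nonneg_left (hC t) (norm_nonneg _)

lemma intervalIntegrable_of_bdd7 {f : ℝ → ℂ} (hf : Measurable f) {Cb : ℝ}
    (hC : ∀ t, ‖f t‖ ≤ Cb) (a b : ℝ) : IntervalIntegrable f volume a b := by
  rw [intervalIntegrable_iff]
  refine Integrable.mono' (g := fun _ => Cb) ?_ hf.aestronglyMeasurable (ae_of_all _ hC)
  refine integrableOn_const ?_
  rw [Set.uIoc, Real.volume_Ioc]
  exact ENNReal.ofReal_ne_top

include hF hF'0 in
set_option maxHeartbeats 1000000 in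
lemma key7 (hl : 0 < l) (M : ℝ) (hbd3 : ∀ s, 0 ≤ s → ‖iteratedDeriv 3 F s‖ ≤ M) (x y : ℝ) :
    A7 F l (x - y) = A7 F l x - (y : ℂ) * B7 F l x + (y : ℂ) ^ 2 / 2 * C7 F l x -
      ∫ θ in (0:ℝ)..1, (((1 - θ) ^ 2 / 2 * y ^ 3 : ℝ) : ℂ) * D7 F l (x - θ * y) := by
  rcases eq_or_ne y 0 with rfl | hy
  · simp
  -- derivative of the path
  have hcomp : ∀ θ : ℝ, HasDerivAt (fun t : ℝ => x - t * y) (-y) θ := by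
    intro θ
    simpa using ((hasDerivAt_id θ).mul_const y).const_sub x
  have hA : ∀ θ : ℝ, HasDerivAt (fun t => A7 F l (x - t * y))
      ((-y : ℂ) * B7 F l (x - θ * y)) θ := by
    intro θ
    have := (hasDerivAt_A7 hF hF'0 l (x - θ * y)).scomp θ (hcomp θ)
    exact this.congr_deriv (by simp [Complex.real_smul])
  have hB : ∀ θ : ℝ, HasDerivAt (fun t => B7 F l (x - t * y))
      ((-y : ℂ) * C7 F l (x - θ * y)) θ := by
    intro θ
    have := (hasDerivAt_B7 hF hF'0 l (x - θ * y)).scomp θ (hcomp θ)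
    exact this.congr_deriv (by simp [Complex.real_smul])
  have hC : ∀ θ : ℝ, x - θ * y ≠ 0 → HasDerivAt (fun t => C7 F l (x - t * y))
      ((-y : ℂ) * D7 F l (x - θ * y)) θ := by
    intro θ hθ
    have := (hasDerivAt_C7 hF l hθ).scomp θ (hcomp θ)
    exact this.congr_deriv (by simp [Complex.real_smul])
  have contBc : Continuous (fun θ : ℝ => B7 F l (x - θ * y)) :=
    (contB7 hF hF'0 l).comp (continuous_const.sub (continuous_id.mul continuous_const))
  have contCc : Continuous (fun θ : ℝ => C7 F l (x - θ * y)) :=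
    (contC7 hF l).comp (continuous_const.sub (continuous_id.mul continuous_const))
  -- step 1
  have e1 : ∫ θ in (0:ℝ)..1, (-y : ℂ) * B7 F l (x - θ * y) = A7 F l (x - y) - A7 F l x := by
    have := intervalIntegral.integral_eq_sub_of_hasDerivAt (f := fun t => A7 F l (x - t * y))
      (f' := fun θ => (-y : ℂ) * B7 F l (x - θ * y)) (a := 0) (b := 1)
      (fun θ _ => hA θ) ((continuous_const.mul contBc).intervalIntegrable 0 1)
    simpa using this
  -- step 2
  have hK : ∀ θ : ℝ, HasDerivAt (fun t : ℝ => (((1 - t) : ℝ) : ℂ) * ((-y : ℂ) * B7 F l (x - t * y)))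
      ((y : ℂ) * B7 F l (x - θ * y) + (((1 - θ) * y ^ 2 : ℝ) : ℂ) * C7 F l (x - θ * y)) θ := by
    intro θ
    have h1 : HasDerivAt (fun t : ℝ => (((1 - t) : ℝ) : ℂ)) (-1 : ℂ) θ := by
      have : HasDerivAt (fun t : ℝ => 1 - t) (-1 : ℝ) θ := by
        simpa using (hasDerivAt_id θ).const_sub 1
      simpa using this.ofReal_comp
    have h2 : HasDerivAt (fun t : ℝ => (-y : ℂ) * B7 F l (x - t * y))
        ((-y : ℂ) * ((-y : ℂ) * C7 F l (x - θ * y))) θ := (hB θ).const_mul _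
    have := h1.mul h2
    refine this.congr_deriv ?_
    push_cast
    ring
  have e2 : (∫ θ in (0:ℝ)..1, (y : ℂ) * B7 F l (x - θ * y)) +
      ∫ θ in (0:ℝ)..1, (((1 - θ) * y ^ 2 : ℝ) : ℂ) * C7 F l (x - θ * y) = (y : ℂ) * B7 F l x := by
    have hint1 : IntervalIntegrable (fun θ : ℝ => (y : ℂ) * B7 F l (x - θ * y)) volume 0 1 :=
      (continuous_const.mul contBc).intervalIntegrable 0 1
    have hint2 : IntervalIntegrable
        (fun θ : ℝ => (((1 - θ) * y ^ 2 : ℝ) : ℂ) * C7 F l (x - θ * y)) volume 0 1 := by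
      apply Continuous.intervalIntegrable
      exact (Complex.continuous_ofReal.comp
        ((continuous_const.sub continuous_id).mul continuous_const)).mul contCc
    have hftc := intervalIntegral.integral_eq_sub_of_hasDerivAt
      (f := fun t : ℝ => (((1 - t) : ℝ) : ℂ) * ((-y : ℂ) * B7 F l (x - t * y)))
      (f' := fun θ => (y : ℂ) * B7 F l (x - θ * y) +
        (((1 - θ) * y ^ 2 : ℝ) : ℂ) * C7 F l (x - θ * y)) (a := 0) (b := 1)
      (fun θ _ => hK θ) (hint1.add hint2)
    rw [intervalIntegral.integral_add hint1 hint2] at hftc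
    simpa using hftc
  -- step 3
  have contL : Continuous (fun θ : ℝ => ((-(1 - θ) ^ 2 / 2 * y ^ 2 : ℝ) : ℂ) *
      C7 F l (x - θ * y)) := by
    refine Continuous.mul ?_ contCc
    exact Complex.continuous_ofReal.comp
      (((((continuous_const.sub continuous_id).pow 2).neg).div_const 2).mul continuous_const)
  have hL : ∀ θ : ℝ, x - θ * y ≠ 0 →
      HasDerivAt (fun t : ℝ => ((-(1 - t) ^ 2 / 2 * y ^ 2 : ℝ) : ℂ) * C7 F l (x - t * y))
        ((((1 - θ) * y ^ 2 : ℝ) : ℂ) * C7 F l (x - θ * y) +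
          (((1 - θ) ^ 2 / 2 * y ^ 3 : ℝ) : ℂ) * D7 F l (x - θ * y)) θ := by
    intro θ hθ
    have h1 : HasDerivAt (fun t : ℝ => -(1 - t) ^ 2 / 2 * y ^ 2) ((1 - θ) * y ^ 2) θ := by
      have hbase : HasDerivAt (fun t : ℝ => (1 - t)) (-1 : ℝ) θ := by
        simpa using (hasDerivAt_id θ).const_sub 1
      have := (((hbase.pow 2).neg).div_const 2).mul_const (y ^ 2)
      refine this.congr_deriv ?_
      ring
    have := h1.ofReal_comp.mul (hC θ hθ)
    refine this.congr_deriv ?_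
    push_cast
    ring
  have hD7bdd : ∀ t : ℝ, ‖D7 F l t‖ ≤ l ^ 3 * M := by
    intro t
    have hnn : 0 ≤ l * |t| := mul_nonneg hl.le (abs_nonneg t)
    have h2 := hbd3 _ hnn
    have hM0 : (0:ℝ) ≤ M := le_trans (norm_nonneg _) (hbd3 0 le_rfl)
    have hrw : ‖D7 F l t‖ = |l ^ 3 * Real.sign t| * ‖iteratedDeriv 3 F (l * |t|)‖ := by
      rw [D7, norm_mul, Complex.norm_real, Real.norm_eq_abs]
    rw [hrw, abs_mul, abs_of_pos (pow_pos hl 3), mul_assoc]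
    have h3 : |Real.sign t| * ‖iteratedDeriv 3 F (l * |t|)‖ ≤ 1 * M :=
      mul_le_mul (abs_sign_le7 t) h2 (norm_nonneg _) zero_le_one
    exact mul_le_mul_of_nonneg_left (by simpa using h3) (pow_pos hl 3).le
  have hM0 : (0:ℝ) ≤ M := le_trans (norm_nonneg _) (hbd3 0 le_rfl)
  have hintD : ∀ a b : ℝ, IntervalIntegrable
      (fun θ : ℝ => (((1 - θ) ^ 2 / 2 * y ^ 3 : ℝ) : ℂ) * D7 F l (x - θ * y)) volume a b := by
    intro a b
    have hmeas : Measurable (fun θ : ℝ => D7 F l (x - θ * y)) :=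
      (measD7 hF l).comp (measurable_const.sub (measurable_id.mul measurable_const))
    have hcont : Continuous (fun θ : ℝ => (((1 - θ) ^ 2 / 2 * y ^ 3 : ℝ) : ℂ)) :=
      Complex.continuous_ofReal.comp
        ((((continuous_const.sub continuous_id).pow 2).div_const 2).mul continuous_const)
    exact intervalIntegrable_mul_bdd7 hcont hmeas (fun t => hD7bdd (x - t * y)) a b
  set θ₀ : ℝ := x / y with hθ₀
  set cc : ℝ := min 1 (max 0 θ₀) with hcc
  have hc0 : (0:ℝ) ≤ cc := le_min zero_le_one (le_max_left 0 θ₀)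
  have hc1 : cc ≤ 1 := min_le_left _ _
  have hroot : ∀ θ : ℝ, x - θ * y = 0 → θ = θ₀ := by
    intro θ h
    rw [hθ₀, eq_div_iff hy]
    linarith
  have hne1 : ∀ θ ∈ Set.Ioo (0:ℝ) cc, x - θ * y ≠ 0 := by
    intro θ hθ h
    have heq := hroot θ h
    have h2 : cc ≤ max 0 θ₀ := min_le_right _ _
    rw [← heq, max_eq_right hθ.1.le] at h2
    linarith [hθ.2]
  have hne2 : ∀ θ ∈ Set.Ioo cc (1:ℝ), x - θ * y ≠ 0 := by
    intro θ hθ h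
    have heq := hroot θ h
    have hθpos : 0 < θ := lt_of_le_of_lt hc0 hθ.1
    have : cc = θ := by rw [hcc, ← heq, max_eq_right hθpos.le, min_eq_right hθ.2.le]
    linarith [hθ.1]
  set L : ℝ → ℂ := fun t => ((-(1 - t) ^ 2 / 2 * y ^ 2 : ℝ) : ℂ) * C7 F l (x - t * y) with hLdef
  set L' : ℝ → ℂ := fun θ => (((1 - θ) * y ^ 2 : ℝ) : ℂ) * C7 F l (x - θ * y) +
      (((1 - θ) ^ 2 / 2 * y ^ 3 : ℝ) : ℂ) * D7 F l (x - θ * y) with hL'def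
  have hintC1 : ∀ a b : ℝ, IntervalIntegrable
      (fun θ : ℝ => (((1 - θ) * y ^ 2 : ℝ) : ℂ) * C7 F l (x - θ * y)) volume a b := by
    intro a b
    apply Continuous.intervalIntegrable
    exact (Complex.continuous_ofReal.comp
      ((continuous_const.sub continuous_id).mul continuous_const)).mul contCc
  have hintL' : ∀ a b : ℝ, IntervalIntegrable L' volume a b := fun a b =>
    (hintC1 a b).add (hintD a b)
  have i1 : ∫ θ in (0:ℝ)..cc, L' θ = L cc - L 0 :=
    intervalIntegral.integral_eq_sub_of_hasDeriv_right_of_le hc0 contL.continuousOn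
      (fun θ hθ => (hL θ (hne1 θ hθ)).hasDerivWithinAt) (hintL' 0 cc)
  have i2 : ∫ θ in cc..1, L' θ = L 1 - L cc :=
    intervalIntegral.integral_eq_sub_of_hasDeriv_right_of_le hc1 contL.continuousOn
      (fun θ hθ => (hL θ (hne2 θ hθ)).hasDerivWithinAt) (hintL' cc 1)
  have isum := intervalIntegral.integral_add_adjacent_intervals (hintL' 0 cc) (hintL' cc 1)
  have e3 : ∫ θ in (0:ℝ)..1, L' θ = L 1 - L 0 := by rw [← isum, i1, i2]; ring
  have hL1 : L 1 = 0 := by simp [hLdef]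
  have hL0 : L 0 = -((y:ℂ) ^ 2) / 2 * C7 F l x := by
    simp only [hLdef]
    norm_num
    push_cast
    ring
  have esplit : ∫ θ in (0:ℝ)..1, L' θ =
      (∫ θ in (0:ℝ)..1, (((1 - θ) * y ^ 2 : ℝ) : ℂ) * C7 F l (x - θ * y)) +
        ∫ θ in (0:ℝ)..1, (((1 - θ) ^ 2 / 2 * y ^ 3 : ℝ) : ℂ) * D7 F l (x - θ * y) :=
    intervalIntegral.integral_add (hintC1 0 1) (hintD 0 1)
  have hnegint : ∫ θ in (0:ℝ)..1, (y:ℂ) * B7 F l (x - θ * y) =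
      -(A7 F l (x - y) - A7 F l x) := by
    rw [← e1, ← intervalIntegral.integral_neg]
    congr 1
    funext θ
    ring
  have E1 : (∫ θ in (0:ℝ)..1, (((1 - θ) * y ^ 2 : ℝ) : ℂ) * C7 F l (x - θ * y)) +
      (∫ θ in (0:ℝ)..1, (((1 - θ) ^ 2 / 2 * y ^ 3 : ℝ) : ℂ) * D7 F l (x - θ * y)) =
      (y:ℂ) ^ 2 / 2 * C7 F l x := by
    rw [← esplit, e3, hL1, hL0]
    ring
  linear_combination E1 - e2 + hnegint

end key

set_option maxHeartbeats 1000000 in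
/-- Order-three moment cancellation: if `g` has vanishing moments of orders `0, 1, 2` and
`F'(0) = 0` (no assumption on `F''(0)`), then
`∫ F(λ|x-y|) g(y) dy = -(λ³/2) ∫∫ (1-θ)² sgn(x-θy) F'''(λ|x-θy|) y³ g(y) dθ dy`,
both integrals being absolutely convergent. -/
theorem stmt7 (F : ℝ → ℂ) (hF : ContDiff ℝ 3 F) (hF'0 : deriv F 0 = 0)
    (hbd : ∃ M : ℝ, ∀ s : ℝ, 0 ≤ s →
      ‖F s‖ + ‖deriv F s‖ + ‖iteratedDeriv 2 F s‖ + ‖iteratedDeriv 3 F s‖ ≤ M)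
    (g : ℝ → ℂ) (hgm : Measurable g)
    (hgint : Integrable (fun y : ℝ => (1 + |y|) ^ 3 * ‖g y‖))
    (hmom : ∀ k : ℕ, k ≤ 2 → ∫ y : ℝ, (y : ℂ) ^ k * g y = 0)
    (l : ℝ) (hl : 0 < l) (x : ℝ) :
    Integrable (fun y : ℝ => F (l * |x - y|) * g y) ∧
    Integrable
      (fun p : ℝ × ℝ =>
        (((1 - p.2) ^ 2 : ℝ) : ℂ) * (Real.sign (x - p.2 * p.1) : ℂ) *
          iteratedDeriv 3 F (l * |x - p.2 * p.1|) * ((p.1 : ℂ) ^ 3 * g p.1))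
      (volume.prod (volume.restrict (Set.Icc 0 1))) ∧
    ∫ y : ℝ, F (l * |x - y|) * g y =
      -((l : ℂ) ^ 3 / 2) * ∫ y : ℝ, ∫ θ in (0:ℝ)..1,
        (((1 - θ) ^ 2 : ℝ) : ℂ) * (Real.sign (x - θ * y) : ℂ) *
          iteratedDeriv 3 F (l * |x - θ * y|) * ((y : ℂ) ^ 3 * g y) := by
  obtain ⟨M, hM⟩ := hbd
  have hM0 : (0:ℝ) ≤ M := le_trans (by positivity) (hM 0 le_rfl)
  have hbd3 : ∀ s : ℝ, 0 ≤ s → ‖iteratedDeriv 3 F s‖ ≤ M := by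
    intro s hs
    have := hM s hs
    nlinarith [norm_nonneg (F s), norm_nonneg (deriv F s), norm_nonneg (iteratedDeriv 2 F s)]
  have hbdF : ∀ s : ℝ, 0 ≤ s → ‖F s‖ ≤ M := by
    intro s hs
    have := hM s hs
    nlinarith [norm_nonneg (deriv F s), norm_nonneg (iteratedDeriv 2 F s),
      norm_nonneg (iteratedDeriv 3 F s)]
  have hpow : ∀ y : ℝ, (1:ℝ) ≤ (1 + |y|) ^ 3 := by
    intro y
    exact one_le_pow₀ (by linarith [abs_nonneg y])
  have hpow3 : ∀ y : ℝ, (|y|:ℝ) ^ 3 ≤ (1 + |y|) ^ 3 := by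
    intro y
    have := abs_nonneg y
    nlinarith
  have hgi : Integrable g := by
    refine hgint.mono' hgm.aestronglyMeasurable (ae_of_all _ fun y => ?_)
    exact le_mul_of_one_le_left (norm_nonneg _) (hpow y)
  have hgik : ∀ k : ℕ, k ≤ 3 → Integrable (fun y : ℝ => (y:ℂ) ^ k * g y) := by
    intro k hk
    refine hgint.mono' ?_ (ae_of_all _ fun y => ?_)
    · exact ((Complex.measurable_ofReal.pow_const k).mul hgm).aestronglyMeasurable
    · have h1 : ‖(y:ℂ) ^ k * g y‖ = |y| ^ k * ‖g y‖ := by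
        rw [norm_mul, norm_pow, Complex.norm_real, Real.norm_eq_abs]
      rw [h1]
      have h2 : |y| ^ k ≤ (1 + |y|) ^ k :=
        pow_le_pow_left₀ (abs_nonneg y) (by linarith [abs_nonneg y]) k
      have h3 : (1 + |y|) ^ k ≤ (1 + |y|) ^ 3 :=
        pow_le_pow_right₀ (by linarith [abs_nonneg y]) hk
      exact mul_le_mul_of_nonneg_right (h2.trans h3) (norm_nonneg _)
  have contAc : Continuous (fun y : ℝ => A7 F l (x - y)) :=
    (contA7 hF hF'0 l).comp (continuous_const.sub continuous_id)
  -- Part 1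
  have part1 : Integrable (fun y : ℝ => F (l * |x - y|) * g y) := by
    refine (hgint.const_mul M).mono'
      (contAc.aestronglyMeasurable.mul hgm.aestronglyMeasurable) (ae_of_all _ fun y => ?_)
    have h1 : ‖F (l * |x - y|) * g y‖ ≤ M * ‖g y‖ := by
      rw [norm_mul]
      exact mul_le_mul_of_nonneg_right
        (hbdF _ (mul_nonneg hl.le (abs_nonneg _))) (norm_nonneg _)
    calc ‖F (l * |x - y|) * g y‖ ≤ M * ‖g y‖ := h1
      _ ≤ M * ((1 + |y|) ^ 3 * ‖g y‖) := by
          refine mul_le_mul_of_nonneg_left ?_ hM0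
          exact le_mul_of_one_le_left (norm_nonneg _) (hpow y)
  -- measurability of the product kernel
  have m1 : Measurable (fun p : ℝ × ℝ => (((1 - p.2) ^ 2 : ℝ) : ℂ)) :=
    Complex.measurable_ofReal.comp ((measurable_const.sub measurable_snd).pow_const 2)
  have m2 : Measurable (fun p : ℝ × ℝ => ((Real.sign (x - p.2 * p.1) : ℝ) : ℂ)) :=
    Complex.measurable_ofReal.comp (measurable_sign7.comp
      (measurable_const.sub (measurable_snd.mul measurable_fst)))
  have m3 : Measurable (fun p : ℝ × ℝ => iteratedDeriv 3 F (l * |x - p.2 * p.1|)) :=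
    (contD3_7 hF).measurable.comp
      (measurable_const.mul (measurable_const.sub (measurable_snd.mul measurable_fst)).abs)
  have m4 : Measurable (fun p : ℝ × ℝ => ((p.1 : ℂ)) ^ 3 * g p.1) :=
    ((Complex.measurable_ofReal.comp measurable_fst).pow_const 3).mul (hgm.comp measurable_fst)
  have hPm : Measurable (fun p : ℝ × ℝ =>
      (((1 - p.2) ^ 2 : ℝ) : ℂ) * (Real.sign (x - p.2 * p.1) : ℂ) *
        iteratedDeriv 3 F (l * |x - p.2 * p.1|) * ((p.1 : ℂ) ^ 3 * g p.1)) :=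
    ((m1.mul m2).mul m3).mul m4
  -- pointwise bound on the kernel
  have hPbd : ∀ y θ : ℝ, 0 ≤ θ → θ ≤ 1 →
      ‖(((1 - θ) ^ 2 : ℝ) : ℂ) * (Real.sign (x - θ * y) : ℂ) *
        iteratedDeriv 3 F (l * |x - θ * y|) * ((y : ℂ) ^ 3 * g y)‖ ≤
        M * (|y| ^ 3 * ‖g y‖) := by
    intro y θ h0 h1
    simp only [norm_mul, norm_pow, Complex.norm_real, Real.norm_eq_abs]
    have e1 : |1 - θ| ^ 2 ≤ 1 := by rw [sq_abs]; nlinarith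
    have e2 : |Real.sign (x - θ * y)| ≤ 1 := abs_sign_le7 _
    have e3 : ‖iteratedDeriv 3 F (l * |x - θ * y|)‖ ≤ M :=
      hbd3 _ (mul_nonneg hl.le (abs_nonneg _))
    have nn : (0:ℝ) ≤ |y| ^ 3 * ‖g y‖ := by positivity
    calc |1 - θ| ^ 2 * |Real.sign (x - θ * y)| * ‖iteratedDeriv 3 F (l * |x - θ * y|)‖ *
          (|y| ^ 3 * ‖g y‖)
        ≤ 1 * 1 * M * (|y| ^ 3 * ‖g y‖) := by
          refine mul_le_mul_of_nonneg_right ?_ nn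
          refine mul_le_mul (mul_le_mul e1 e2 (abs_nonneg _) (by positivity)) e3
            (norm_nonneg _) (by norm_num)
      _ = M * (|y| ^ 3 * ‖g y‖) := by ring
  haveI hfin : IsFiniteMeasure (volume.restrict (Set.Icc (0:ℝ) 1)) := by
    constructor
    rw [Measure.restrict_apply_univ, Real.volume_Icc]
    exact ENNReal.ofReal_lt_top
  -- Part 2
  have part2 : Integrable
      (fun p : ℝ × ℝ =>
        (((1 - p.2) ^ 2 : ℝ) : ℂ) * (Real.sign (x - p.2 * p.1) : ℂ) *
          iteratedDeriv 3 F (l * |x - p.2 * p.1|) * ((p.1 : ℂ) ^ 3 * g p.1))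
      (volume.prod (volume.restrict (Set.Icc 0 1))) := by
    rw [integrable_prod_iff hPm.aestronglyMeasurable]
    constructor
    · refine ae_of_all _ fun y => ?_
      have hconst : Integrable (fun _ : ℝ => M * (|y| ^ 3 * ‖g y‖))
          (volume.restrict (Set.Icc (0:ℝ) 1)) := integrable_const _
      refine hconst.mono' ?_ ?_
      · exact (hPm.comp (measurable_const.prodMk measurable_id)).aestronglyMeasurable
      · filter_upwards [ae_restrict_mem measurableSet_Icc] with θ hθ
        exact hPbd y θ hθ.1 hθ.2
    · refine (hgint.const_mul M).mono' ?_ (ae_of_all _ fun y => ?_)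
      · exact (hPm.stronglyMeasurable.norm.integral_prod_right').aestronglyMeasurable
      · have htot : ((volume.restrict (Set.Icc (0:ℝ) 1)) Set.univ).toReal = 1 := by
          rw [Measure.restrict_apply_univ, Real.volume_Icc]
          norm_num
        have hb := norm_integral_le_of_norm_le_const
          (μ := volume.restrict (Set.Icc (0:ℝ) 1))
          (f := fun θ => ‖(((1 - θ) ^ 2 : ℝ) : ℂ) * (Real.sign (x - θ * y) : ℂ) *
            iteratedDeriv 3 F (l * |x - θ * y|) * ((y : ℂ) ^ 3 * g y)‖)
          (C := M * (|y| ^ 3 * ‖g y‖)) ?_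
        · rw [measureReal_def, htot, mul_one] at hb
          have h2 : M * (|y| ^ 3 * ‖g y‖) ≤ M * ((1 + |y|) ^ 3 * ‖g y‖) := by
            refine mul_le_mul_of_nonneg_left ?_ hM0
            exact mul_le_mul_of_nonneg_right (hpow3 y) (norm_nonneg _)
          calc ‖∫ θ, ‖(((1 - θ) ^ 2 : ℝ) : ℂ) * (Real.sign (x - θ * y) : ℂ) *
                iteratedDeriv 3 F (l * |x - θ * y|) * ((y : ℂ) ^ 3 * g y)‖
                  ∂(volume.restrict (Set.Icc (0:ℝ) 1))‖
              ≤ M * (|y| ^ 3 * ‖g y‖) := hb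
            _ ≤ M * ((1 + |y|) ^ 3 * ‖g y‖) := h2
        · filter_upwards [ae_restrict_mem measurableSet_Icc] with θ hθ
          rw [Real.norm_eq_abs, abs_of_nonneg (norm_nonneg _)]
          exact hPbd y θ hθ.1 hθ.2
  refine ⟨part1, part2, ?_⟩
  -- Part 3
  set Ib : ℝ → ℂ := fun y => ∫ θ in (0:ℝ)..1,
    (((1 - θ) ^ 2 : ℝ) : ℂ) * (Real.sign (x - θ * y) : ℂ) *
      iteratedDeriv 3 F (l * |x - θ * y|) with hIbdef
  have hJ : ∀ y : ℝ, (∫ θ in (0:ℝ)..1,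
      (((1 - θ) ^ 2 : ℝ) : ℂ) * (Real.sign (x - θ * y) : ℂ) *
        iteratedDeriv 3 F (l * |x - θ * y|) * ((y : ℂ) ^ 3 * g y)) =
      Ib y * ((y : ℂ) ^ 3 * g y) := by
    intro y
    rw [hIbdef]
    exact intervalIntegral.integral_mul_const _ _
  have hR : ∀ y : ℝ, (∫ θ in (0:ℝ)..1, (((1 - θ) ^ 2 / 2 * y ^ 3 : ℝ) : ℂ) *
      D7 F l (x - θ * y)) = (l:ℂ) ^ 3 * (y:ℂ) ^ 3 / 2 * Ib y := by
    intro y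
    rw [hIbdef, ← intervalIntegral.integral_const_mul]
    congr 1
    funext θ
    simp only [D7]
    push_cast
    ring
  have hsplit : (fun y : ℝ => F (l * |x - y|) * g y) = fun y : ℝ =>
      A7 F l x * g y - ((y:ℂ) * g y) * B7 F l x + ((y:ℂ) ^ 2 * g y) * (C7 F l x / 2)
        - ((l:ℂ) ^ 3 / 2) * (Ib y * ((y:ℂ) ^ 3 * g y)) := by
    funext y
    have hk := key7 hF hF'0 l hl M hbd3 x y
    rw [hR y] at hk
    have hid : F (l * |x - y|) = A7 F l (x - y) := rfl
    rw [hid, hk]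
    ring
  -- integrability of pieces
  have hIbsm : StronglyMeasurable Ib := by
    have : Ib = fun y => ∫ θ, (((1 - θ) ^ 2 : ℝ) : ℂ) * (Real.sign (x - θ * y) : ℂ) *
        iteratedDeriv 3 F (l * |x - θ * y|) ∂(volume.restrict (Set.Ioc (0:ℝ) 1)) :=
      funext fun y => intervalIntegral.integral_of_le zero_le_one
    rw [this]
    exact ((m1.mul m2).mul m3).stronglyMeasurable.integral_prod_right'
  have hIbbd : ∀ y : ℝ, ‖Ib y‖ ≤ M := by
    intro y
    have hb := intervalIntegral.norm_integral_le_of_norm_le_const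
      (a := (0:ℝ)) (b := 1) (C := M)
      (f := fun θ => (((1 - θ) ^ 2 : ℝ) : ℂ) * (Real.sign (x - θ * y) : ℂ) *
        iteratedDeriv 3 F (l * |x - θ * y|)) ?_
    · rw [show M = M * |(1:ℝ) - 0| from by norm_num]
      exact hb
    · intro θ hθ
      rw [Set.uIoc_of_le zero_le_one] at hθ
      rw [norm_mul, norm_mul, Complex.norm_real, Complex.norm_real, Real.norm_eq_abs,
        Real.norm_eq_abs]
      have e1 : |(1 - θ) ^ 2| ≤ 1 := by
        rw [abs_of_nonneg (sq_nonneg _)]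
        nlinarith [hθ.1, hθ.2]
      have e3 : ‖iteratedDeriv 3 F (l * |x - θ * y|)‖ ≤ M :=
        hbd3 _ (mul_nonneg hl.le (abs_nonneg _))
      calc |(1 - θ) ^ 2| * |Real.sign (x - θ * y)| *
            ‖iteratedDeriv 3 F (l * |x - θ * y|)‖
          ≤ 1 * 1 * M := by
            refine mul_le_mul (mul_le_mul e1 (abs_sign_le7 _) (abs_nonneg _) zero_le_one) e3
              (norm_nonneg _) (by norm_num)
        _ = M := by ring
  have igJ : Integrable (fun y : ℝ => Ib y * ((y:ℂ) ^ 3 * g y)) := by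
    refine (hgint.const_mul M).mono' ?_ (ae_of_all _ fun y => ?_)
    · exact (hIbsm.measurable.mul
        ((Complex.measurable_ofReal.pow_const 3).mul hgm)).aestronglyMeasurable
    · have h1 : ‖Ib y * ((y:ℂ) ^ 3 * g y)‖ = ‖Ib y‖ * (|y| ^ 3 * ‖g y‖) := by
        rw [norm_mul, norm_mul, norm_pow, Complex.norm_real, Real.norm_eq_abs]
      rw [h1]
      calc ‖Ib y‖ * (|y| ^ 3 * ‖g y‖) ≤ M * (|y| ^ 3 * ‖g y‖) := by
            refine mul_le_mul_of_nonneg_right (hIbbd y) (by positivity)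
        _ ≤ M * ((1 + |y|) ^ 3 * ‖g y‖) := by
            refine mul_le_mul_of_nonneg_left ?_ hM0
            exact mul_le_mul_of_nonneg_right (hpow3 y) (norm_nonneg _)
  have ig0 : Integrable (fun y : ℝ => A7 F l x * g y) := hgi.const_mul _
  have ig1 : Integrable (fun y : ℝ => ((y:ℂ) * g y) * B7 F l x) := by
    have := (hgik 1 (by norm_num)).mul_const (B7 F l x)
    simpa [pow_one] using this
  have ig2 : Integrable (fun y : ℝ => ((y:ℂ) ^ 2 * g y) * (C7 F l x / 2)) :=
    (hgik 2 (by norm_num)).mul_const _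
  have ig3 : Integrable (fun y : ℝ => ((l:ℂ) ^ 3 / 2) * (Ib y * ((y:ℂ) ^ 3 * g y))) :=
    igJ.const_mul _
  have igAB : Integrable (fun y : ℝ => A7 F l x * g y - ((y:ℂ) * g y) * B7 F l x) :=
    ig0.sub ig1
  have igA : Integrable (fun y : ℝ => A7 F l x * g y - ((y:ℂ) * g y) * B7 F l x
      + ((y:ℂ) ^ 2 * g y) * (C7 F l x / 2)) := igAB.add ig2
  rw [hsplit, integral_sub igA ig3, integral_add igAB ig2, integral_sub ig0 ig1]
  have h0 : (∫ y : ℝ, A7 F l x * g y) = 0 := by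
    rw [integral_const_mul]
    have := hmom 0 (by norm_num)
    simp only [pow_zero, one_mul] at this
    rw [this, mul_zero]
  have h1 : (∫ y : ℝ, ((y:ℂ) * g y) * B7 F l x) = 0 := by
    rw [integral_mul_const]
    have := hmom 1 (by norm_num)
    simp only [pow_one] at this
    rw [this, zero_mul]
  have h2 : (∫ y : ℝ, ((y:ℂ) ^ 2 * g y) * (C7 F l x / 2)) = 0 := by
    rw [integral_mul_const, hmom 2 le_rfl, zero_mul]
  have h3 : (∫ y : ℝ, ((l:ℂ) ^ 3 / 2) * (Ib y * ((y:ℂ) ^ 3 * g y))) =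
      ((l:ℂ) ^ 3 / 2) * ∫ y : ℝ, Ib y * ((y:ℂ) ^ 3 * g y) := integral_const_mul _ _
  rw [h0, h1, h2, h3]
  have h4 : (∫ y : ℝ, ∫ θ in (0:ℝ)..1,
      (((1 - θ) ^ 2 : ℝ) : ℂ) * (Real.sign (x - θ * y) : ℂ) *
        iteratedDeriv 3 F (l * |x - θ * y|) * ((y : ℂ) ^ 3 * g y)) =
      ∫ y : ℝ, Ib y * ((y:ℂ) ^ 3 * g y) := by
    congr 1
    funext y
    exact hJ y
  rw [h4]
  ring
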